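/- Assume w = log(dP_left/dP_right) is integrable with respect to both P₁ and P₂ and the relevant KL divergences are finite. Then the expected increments of the DR-CUSUM statistic satisfy E[w(X_t)] ≥ 0 for every t < T* and E[w(X_t)] ≤ 0 for every t ≥ T*; consequently, for every t ∈ {0,1,…,n}, E[S(t)] ≤ E[S(T*−1)], i.e. the expected DR-CUSUM statistic attains its maximum at the true change point, irrespective of the choice of the split point T_split. (Corollary 1 of the paper.) -/

import Mathlib

open MeasureTheory ProbabilityTheory

/-- Kullback–Leibler divergence `KL(μ‖ν) = ∫ log (dμ/dν) dμ`. -/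
noncomputable def KL {Ω : Type*} [MeasurableSpace Ω] (μ ν : Measure Ω) : ℝ :=
  ∫ x, Real.log ((μ.rnDeriv ν x).toReal) ∂μ

/-- The mixture distribution `P(λ) = λ·P₁ + (1-λ)·P₂`. -/
noncomputable def mix {Ω : Type*} [MeasurableSpace Ω] (P₁ P₂ : Measure Ω) (l : ℝ) :
    Measure Ω :=
  (ENNReal.ofReal l) • P₁ + (ENNReal.ofReal (1 - l)) • P₂

section Aux

variable {Ω : Type*} [MeasurableSpace Ω]

/-- Gibbs' inequality: the KL divergence is nonnegative. -/
lemma gibbs_aux (μ ν : Measure Ω) [IsProbabilityMeasure μ] [IsProbabilityMeasure ν]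
    (hμν : μ ≪ ν) (hνμ : ν ≪ μ) (hint : Integrable (llr μ ν) μ) :
    0 ≤ ∫ x, llr μ ν x ∂μ := by
  have hexp : (fun x => Real.exp (-llr μ ν x)) =ᵐ[μ] fun x => (ν.rnDeriv μ x).toReal :=
    exp_neg_llr hμν
  have hrn : Integrable (fun x => (ν.rnDeriv μ x).toReal) μ :=
    Measure.integrable_toReal_rnDeriv
  have hgi : Integrable (fun x => Real.exp (-llr μ ν x)) μ := hrn.congr hexp.symm
  have hjen : Real.exp (∫ x, -llr μ ν x ∂μ) ≤ ∫ x, Real.exp (-llr μ ν x) ∂μ :=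
    convexOn_exp.map_integral_le Real.continuous_exp.continuousOn isClosed_univ
      (Filter.Eventually.of_forall fun x => Set.mem_univ _) hint.neg hgi
  have heq : ∫ x, Real.exp (-llr μ ν x) ∂μ = 1 := by
    rw [integral_congr_ae hexp, Measure.integral_toReal_rnDeriv hνμ, probReal_univ]
  rw [heq] at hjen
  have h0 := Real.exp_le_one_iff.1 hjen
  rw [integral_neg] at h0
  linarith

/-- The reverse form of Gibbs' inequality. -/
lemma gibbs_aux' (μ ν : Measure Ω) [IsProbabilityMeasure μ] [IsProbabilityMeasure ν]
    (hμν : μ ≪ ν) (hνμ : ν ≪ μ) (hint : Integrable (llr ν μ) ν) :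
    ∫ x, llr μ ν x ∂ν ≤ 0 := by
  have h := gibbs_aux ν μ hνμ hμν hint
  have hcg : ∫ x, llr μ ν x ∂ν = ∫ x, -llr ν μ x ∂ν := by
    apply integral_congr_ae
    filter_upwards [neg_llr hνμ] with x hx
    exact hx.symm
  rw [hcg, integral_neg]
  linarith

lemma isProb_mix (P₁ P₂ : Measure Ω) [IsProbabilityMeasure P₁] [IsProbabilityMeasure P₂]
    {l : ℝ} (h0 : 0 ≤ l) (h1 : l ≤ 1) : IsProbabilityMeasure (mix P₁ P₂ l) := by
  constructor
  rw [mix, Measure.add_apply, Measure.smul_apply, Measure.smul_apply, measure_univ,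
    measure_univ, smul_eq_mul, smul_eq_mul, mul_one, mul_one,
    ← ENNReal.ofReal_add h0 (by linarith), show l + (1 - l) = 1 by ring, ENNReal.ofReal_one]

lemma integral_mix {P₁ P₂ : Measure Ω} {f : Ω → ℝ} {l : ℝ} (h0 : 0 ≤ l) (h1 : l ≤ 1)
    (hf1 : Integrable f P₁) (hf2 : Integrable f P₂) :
    ∫ x, f x ∂(mix P₁ P₂ l) = l * ∫ x, f x ∂P₁ + (1 - l) * ∫ x, f x ∂P₂ := by
  rw [mix, integral_add_measure (hf1.smul_measure ENNReal.ofReal_ne_top)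
      (hf2.smul_measure ENNReal.ofReal_ne_top),
    integral_smul_measure, integral_smul_measure,
    ENNReal.toReal_ofReal h0, ENNReal.toReal_ofReal (by linarith : (0:ℝ) ≤ 1 - l)]
  simp [smul_eq_mul]

lemma mix_ac_left {P₁ P₂ : Measure Ω} (h : P₂ ≪ P₁) (l : ℝ) : mix P₁ P₂ l ≪ P₁ := by
  intro s hs
  have h2 : P₂ s = 0 := h hs
  simp [mix, Measure.add_apply, Measure.smul_apply, hs, h2]

lemma mix_ac_right {P₁ P₂ : Measure Ω} (h : P₁ ≪ P₂) (l : ℝ) : mix P₁ P₂ l ≪ P₂ := by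
  intro s hs
  have h2 : P₁ s = 0 := h hs
  simp [mix, Measure.add_apply, Measure.smul_apply, hs, h2]

lemma ac_mix_of_pos {P₁ P₂ : Measure Ω} {l : ℝ} (h0 : 0 < l) : P₁ ≪ mix P₁ P₂ l := by
  intro s hs
  simp only [mix, Measure.add_apply, Measure.smul_apply, smul_eq_mul] at hs
  rcases add_eq_zero.1 hs with ⟨h1, -⟩
  rcases mul_eq_zero.1 h1 with h | h
  · exact absurd h (by simp only [ne_eq, ENNReal.ofReal_eq_zero, not_le]; linarith)
  · exact h

lemma ac_mix_of_lt_one {P₁ P₂ : Measure Ω} {l : ℝ} (h1 : l < 1) : P₂ ≪ mix P₁ P₂ l := by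
  intro s hs
  simp only [mix, Measure.add_apply, Measure.smul_apply, smul_eq_mul] at hs
  rcases add_eq_zero.1 hs with ⟨-, h2⟩
  rcases mul_eq_zero.1 h2 with h | h
  · exact absurd h (by simp only [ne_eq, ENNReal.ofReal_eq_zero, not_le]; linarith)
  · exact h

lemma mix_one (P₁ P₂ : Measure Ω) : mix P₁ P₂ 1 = P₁ := by
  simp [mix]

lemma core_A {P₁ P₂ : Measure Ω} [IsProbabilityMeasure P₁] [IsProbabilityMeasure P₂]
    (hac₁ : P₁ ≪ P₂) (hac₂ : P₂ ≪ P₁) {l : ℝ} (h0 : 0 ≤ l) (h1 : l ≤ 1)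
    (hKL₁ : Integrable (llr P₁ (mix P₁ P₂ l)) P₁)
    (hKL₂ : Integrable (llr (mix P₁ P₂ l) P₁) (mix P₁ P₂ l))
    (hInt₂ : Integrable (llr P₁ (mix P₁ P₂ l)) P₂) :
    0 ≤ (∫ x, llr P₁ (mix P₁ P₂ l) x ∂P₁) ∧ (∫ x, llr P₁ (mix P₁ P₂ l) x ∂P₂) ≤ 0 := by
  haveI : IsProbabilityMeasure (mix P₁ P₂ l) := isProb_mix P₁ P₂ h0 h1
  rcases eq_or_lt_of_le h1 with rfl | hl1
  · -- l = 1 : the mixture is `P₁` itself and the llr vanishes a.e.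
    have hz : llr P₁ (mix P₁ P₂ 1) =ᵐ[P₁] fun _ => (0:ℝ) := by
      rw [mix_one]
      filter_upwards [Measure.rnDeriv_self P₁] with x hx
      simp [llr, hx]
    have hz2 : llr P₁ (mix P₁ P₂ 1) =ᵐ[P₂] fun _ => (0:ℝ) := hz.filter_mono hac₂.ae_le
    constructor
    · rw [integral_congr_ae hz]; simp
    · rw [integral_congr_ae hz2]; simp
  · have hν1 : mix P₁ P₂ l ≪ P₁ := mix_ac_left hac₂ l
    have h1ν : P₁ ≪ mix P₁ P₂ l := hac₁.trans (ac_mix_of_lt_one hl1)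
    have hpos : 0 ≤ ∫ x, llr P₁ (mix P₁ P₂ l) x ∂P₁ := gibbs_aux _ _ h1ν hν1 hKL₁
    have hneg : ∫ x, llr P₁ (mix P₁ P₂ l) x ∂(mix P₁ P₂ l) ≤ 0 := gibbs_aux' _ _ h1ν hν1 hKL₂
    have hmix : ∫ x, llr P₁ (mix P₁ P₂ l) x ∂(mix P₁ P₂ l)
        = l * ∫ x, llr P₁ (mix P₁ P₂ l) x ∂P₁ + (1 - l) * ∫ x, llr P₁ (mix P₁ P₂ l) x ∂P₂ :=
      integral_mix h0 h1 hKL₁ hInt₂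
    rw [hmix] at hneg
    refine ⟨hpos, ?_⟩
    nlinarith [mul_nonneg h0 hpos]

lemma core_B {P₁ P₂ : Measure Ω} [IsProbabilityMeasure P₁] [IsProbabilityMeasure P₂]
    (hac₁ : P₁ ≪ P₂) (hac₂ : P₂ ≪ P₁) {l : ℝ} (h0 : 0 < l) (h1 : l < 1)
    (hKL₁ : Integrable (llr (mix P₁ P₂ l) P₂) (mix P₁ P₂ l))
    (hKL₂ : Integrable (llr P₂ (mix P₁ P₂ l)) P₂)
    (hInt₁ : Integrable (llr (mix P₁ P₂ l) P₂) P₁)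
    (hInt₂ : Integrable (llr (mix P₁ P₂ l) P₂) P₂) :
    0 ≤ (∫ x, llr (mix P₁ P₂ l) P₂ x ∂P₁) ∧ (∫ x, llr (mix P₁ P₂ l) P₂ x ∂P₂) ≤ 0 := by
  haveI : IsProbabilityMeasure (mix P₁ P₂ l) := isProb_mix P₁ P₂ h0.le h1.le
  have hμ2 : mix P₁ P₂ l ≪ P₂ := mix_ac_right hac₁ l
  have h2μ : P₂ ≪ mix P₁ P₂ l := ac_mix_of_lt_one h1
  have hneg : ∫ x, llr (mix P₁ P₂ l) P₂ x ∂P₂ ≤ 0 := gibbs_aux' _ _ hμ2 h2μ hKL₂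
  have hpos : 0 ≤ ∫ x, llr (mix P₁ P₂ l) P₂ x ∂(mix P₁ P₂ l) := gibbs_aux _ _ hμ2 h2μ hKL₁
  have hmix : ∫ x, llr (mix P₁ P₂ l) P₂ x ∂(mix P₁ P₂ l)
      = l * ∫ x, llr (mix P₁ P₂ l) P₂ x ∂P₁ + (1 - l) * ∫ x, llr (mix P₁ P₂ l) P₂ x ∂P₂ :=
    integral_mix h0.le h1.le hInt₁ hInt₂
  rw [hmix] at hpos
  refine ⟨?_, hneg⟩
  nlinarith [mul_nonneg (by linarith : (0:ℝ) ≤ 1 - l) (neg_nonneg.2 hneg)]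

end Aux

/-- Corollary 1 of the paper: the expected increments of the DR-CUSUM statistic are
nonnegative before the change point and nonpositive after it, and consequently the
expected DR-CUSUM statistic `E[S(t)]` attains its maximum at the true change point `T*`,
irrespective of the choice of the split point `T_split`. -/
theorem stmt3 {Ω Θ : Type*} [MeasurableSpace Ω] [MeasurableSpace Θ]
    (Pr : Measure Θ) [IsProbabilityMeasure Pr]
    (P₁ P₂ : Measure Ω) [IsProbabilityMeasure P₁] [IsProbabilityMeasure P₂]
    (hac₁ : P₁ ≪ P₂) (hac₂ : P₂ ≪ P₁)
    (n Tstar Tsplit : ℕ) (hT₁ : 1 ≤ Tstar) (hT₂ : Tstar ≤ n)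
    (hTs₁ : 1 ≤ Tsplit) (hTs₂ : Tsplit ≤ n)
    (X : ℕ → Θ → Ω) (hXmeas : ∀ t, Measurable (X t))
    (hInd : iIndepFun (m := fun _ : {k : ℕ // 1 ≤ k ∧ k ≤ n} => ‹MeasurableSpace Ω›)
      (fun k : {k : ℕ // 1 ≤ k ∧ k ≤ n} => X k.1) Pr)
    (hpre : ∀ t, 1 ≤ t → t < Tstar → Measure.map (X t) Pr = P₁)
    (hpost : ∀ t, Tstar ≤ t → t ≤ n → Measure.map (X t) Pr = P₂)
    (Pleft Pright : Measure Ω)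
    (hPl : Pleft = if Tsplit ≤ Tstar then P₁
      else mix P₁ P₂ ((Tstar : ℝ) / (Tsplit : ℝ)))
    (hPr : Pright = if Tsplit ≤ Tstar
      then mix P₁ P₂ (((Tstar : ℝ) - (Tsplit : ℝ)) / ((n : ℝ) - (Tsplit : ℝ))) else P₂)
    (w : Ω → ℝ) (hw : w = fun x => Real.log ((Pleft.rnDeriv Pright x).toReal))
    (hInt₁ : Integrable w P₁) (hInt₂ : Integrable w P₂)
    (hKL₁ : Integrable (fun x => Real.log ((Pleft.rnDeriv Pright x).toReal)) Pleft)
    (hKL₂ : Integrable (fun x => Real.log ((Pright.rnDeriv Pleft x).toReal)) Pright)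
    (S : ℕ → Θ → ℝ) (hS : ∀ t θ, S t θ = ∑ j ∈ Finset.Icc 1 t, w (X j θ)) :
    (∀ t, 1 ≤ t → t < Tstar → 0 ≤ ∫ θ, w (X t θ) ∂Pr) ∧
    (∀ t, Tstar ≤ t → t ≤ n → (∫ θ, w (X t θ) ∂Pr) ≤ 0) ∧
    (∀ t, t ≤ n → (∫ θ, S t θ ∂Pr) ≤ ∫ θ, S (Tstar - 1) θ ∂Pr) := by
  -- Step 1: the two key inequalities about the integrals of `w` under `P₁` and `P₂`.
  obtain ⟨hL1, hL2⟩ : (0 ≤ ∫ x, w x ∂P₁) ∧ (∫ x, w x ∂P₂ ≤ 0) := by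
    by_cases hcase : Tsplit ≤ Tstar
    · rw [if_pos hcase] at hPl hPr
      subst hPl; subst hPr; subst hw
      have h0 : (0:ℝ) ≤ ((Tstar : ℝ) - Tsplit) / ((n : ℝ) - Tsplit) := by
        rcases eq_or_lt_of_le hTs₂ with h | h
        · rw [h]; simp
        · have hd : (0:ℝ) < (n : ℝ) - Tsplit := by
            have : (Tsplit : ℝ) < n := Nat.cast_lt.2 h
            linarith
          have hn0 : (0:ℝ) ≤ (Tstar : ℝ) - Tsplit := by
            have : (Tsplit : ℝ) ≤ Tstar := Nat.cast_le.2 hcase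
            linarith
          exact div_nonneg hn0 hd.le
      have h1 : ((Tstar : ℝ) - Tsplit) / ((n : ℝ) - Tsplit) ≤ 1 := by
        rcases eq_or_lt_of_le hTs₂ with h | h
        · rw [h]; simp
        · have hd : (0:ℝ) < (n : ℝ) - Tsplit := by
            have : (Tsplit : ℝ) < n := Nat.cast_lt.2 h
            linarith
          rw [div_le_one hd]
          have : (Tstar : ℝ) ≤ n := Nat.cast_le.2 hT₂
          linarith
      exact core_A hac₁ hac₂ h0 h1 hKL₁ hKL₂ hInt₂
    · have hts : Tstar < Tsplit := not_le.1 hcase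
      rw [if_neg hcase] at hPl hPr
      subst hPl; subst hPr; subst hw
      have h0 : (0:ℝ) < (Tstar : ℝ) / (Tsplit : ℝ) :=
        div_pos (Nat.cast_pos.2 (by omega)) (Nat.cast_pos.2 (by omega))
      have h1 : (Tstar : ℝ) / (Tsplit : ℝ) < 1 :=
        (div_lt_one (Nat.cast_pos.2 (by omega))).2 (Nat.cast_lt.2 hts)
      exact core_B hac₁ hac₂ h0 h1 hKL₁ hKL₂ hInt₁ hInt₂
  -- Step 2: measurability of `w`.
  have hwmeas : Measurable w := by
    rw [hw]
    exact (Measure.measurable_rnDeriv _ _).ennreal_toReal.log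
  -- Step 3: change of variables for each coordinate.
  have hkey : ∀ t, 1 ≤ t → t ≤ n →
      Integrable (fun θ => w (X t θ)) Pr ∧
        ∫ θ, w (X t θ) ∂Pr = ∫ x, w x ∂(Measure.map (X t) Pr) := by
    intro t h1 h2
    have hm : Measure.map (X t) Pr = P₁ ∨ Measure.map (X t) Pr = P₂ := by
      by_cases h : t < Tstar
      · exact Or.inl (hpre t h1 h)
      · exact Or.inr (hpost t (not_lt.1 h) h2)
    constructor
    · have hi : Integrable w (Measure.map (X t) Pr) := by
        rcases hm with h | h <;> rw [h]
        exacts [hInt₁, hInt₂]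
      exact (integrable_map_measure hwmeas.aestronglyMeasurable (hXmeas t).aemeasurable).1 hi
    · exact (integral_map (hXmeas t).aemeasurable hwmeas.aestronglyMeasurable).symm
  have part1 : ∀ t, 1 ≤ t → t < Tstar → 0 ≤ ∫ θ, w (X t θ) ∂Pr := by
    intro t h1 h2
    have h2n : t ≤ n := le_trans h2.le hT₂
    rw [(hkey t h1 h2n).2, hpre t h1 h2]
    exact hL1
  have part2 : ∀ t, Tstar ≤ t → t ≤ n → ∫ θ, w (X t θ) ∂Pr ≤ 0 := by
    intro t h1 h2
    have h1' : 1 ≤ t := le_trans hT₁ h1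
    rw [(hkey t h1' h2).2, hpost t h1 h2]
    exact hL2
  refine ⟨part1, part2, ?_⟩
  intro t htn
  have hSint : ∀ s, s ≤ n →
      ∫ θ, S s θ ∂Pr = ∑ j ∈ Finset.Icc 1 s, ∫ θ, w (X j θ) ∂Pr := by
    intro s hs
    simp only [hS]
    refine integral_finset_sum _ fun j hj => ?_
    rw [Finset.mem_Icc] at hj
    exact (hkey j hj.1 (le_trans hj.2 hs)).1
  rw [hSint t htn, hSint (Tstar - 1) (le_trans (Nat.sub_le _ _) hT₂)]
  rcases le_or_gt t (Tstar - 1) with h | h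
  · refine Finset.sum_le_sum_of_subset_of_nonneg (Finset.Icc_subset_Icc_right h) ?_
    intro j hj hj'
    rw [Finset.mem_Icc] at hj
    exact part1 j hj.1 (by omega)
  · have hsub : Finset.Icc 1 (Tstar - 1) ⊆ Finset.Icc 1 t :=
      Finset.Icc_subset_Icc_right (by omega)
    have hneg := Finset.sum_le_sum_of_subset_of_nonneg
      (f := fun j => -(∫ θ, w (X j θ) ∂Pr)) hsub ?_
    · simp only [Finset.sum_neg_distrib] at hneg
      linarith
    · intro j hj hj'
      rw [Finset.mem_Icc] at hj hj'
      have hTj : Tstar ≤ j := by omega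
      exact neg_nonneg.2 (part2 j hTj (le_trans hj.2 htn))
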